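/- arXiv:1606.03386 — 3 statements merged into one kernel-verified Lean document; each statement's English description precedes it below -/
import Mathlib

section
/- For all s ∈ (0,1/2) and integer k ≥ 3, θ̃(1/2) − θ̃(s) > θ̃(1−s) − θ̃(1/2); that is, the adoption curve on a random k-regular graph is asymmetric: growing from fraction s to 1/2 takes strictly longer than growing from 1/2 to 1−s. -/
open Real

-- concavity lemma: for 1 < b < 2, 0 < x < 1/2: 1 - 2x < (1-x)^b - x^b
lemma glem {b x : ℝ} (hb1 : 1 < b) (hb2 : b < 2) (hx : 0 < x) (hx2 : x < 1/2) :
    1 - 2*x < (1-x) ^ b - x ^ b := by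
  set g : ℝ → ℝ := fun t => (1-t) ^ b - t ^ b + 2*t - 1 with hg
  have hderiv : ∀ t : ℝ, HasDerivAt g (-(b * (1-t) ^ (b-1)) - b * t ^ (b-1) + 2) t := by
    intro t
    have h1 : HasDerivAt (fun t : ℝ => (1-t) ^ b) (-(b * (1-t) ^ (b-1))) t := by
      have hc : HasDerivAt (fun t : ℝ => 1 - t) (-1) t := (hasDerivAt_id t).const_sub 1
      have := (Real.hasDerivAt_rpow_const (x := 1 - t) (p := b) (Or.inr hb1.le)).comp t hc
      exact this.congr_deriv (by ring)
    have h2 : HasDerivAt (fun t : ℝ => t ^ b) (b * t ^ (b-1)) t :=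
      Real.hasDerivAt_rpow_const (Or.inr hb1.le)
    have h3 := ((h1.sub h2).add ((hasDerivAt_id t).const_mul 2)).sub_const 1
    exact h3.congr_deriv (by ring)
  have hcont : Continuous g := by
    rw [continuous_iff_continuousAt]; exact fun t => (hderiv t).continuousAt
  have hderiv_eq : deriv g = fun t => -(b * (1-t) ^ (b-1)) - b * t ^ (b-1) + 2 := by
    funext t; exact (hderiv t).deriv
  have hconc : StrictConcaveOn ℝ (Set.Icc (0:ℝ) (1/2)) g := by
    apply strictConcaveOn_of_deriv2_neg (convex_Icc _ _) hcont.continuousOn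
    intro t ht
    rw [interior_Icc] at ht
    obtain ⟨ht0, ht2⟩ := ht
    have ht1 : t < 1 - t := by linarith
    have h1t : (0:ℝ) < 1 - t := by linarith
    have hd2 : HasDerivAt (fun t : ℝ => -(b * (1-t) ^ (b-1)) - b * t ^ (b-1) + 2)
        (b * (b-1) * (1-t) ^ (b-2) - b * (b-1) * t ^ (b-2)) t := by
      have hc : HasDerivAt (fun t : ℝ => 1 - t) (-1) t := (hasDerivAt_id t).const_sub 1
      have hA := ((Real.hasDerivAt_rpow_const (x := 1 - t) (p := b - 1)
        (Or.inl h1t.ne')).comp t hc).const_mul b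
      have hB := (Real.hasDerivAt_rpow_const (x := t) (p := b - 1)
        (Or.inl ht0.ne')).const_mul b
      have e1 : b - 1 - 1 = b - 2 := by ring
      rw [e1] at hA hB
      have h3 := ((hA.neg.sub hB).add_const 2)
      exact h3.congr_deriv (by ring)
    have : deriv^[2] g t = b * (b-1) * (1-t) ^ (b-2) - b * (b-1) * t ^ (b-2) := by
      simp only [Function.iterate_succ, Function.iterate_zero, Function.comp_apply, id]
      rw [hderiv_eq]
      exact hd2.deriv
    rw [this]
    have hlt : (1-t) ^ (b-2) < t ^ (b-2) :=
      Real.rpow_lt_rpow_of_neg ht0 ht1 (by linarith)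
    have hbb : 0 < b * (b-1) := by nlinarith
    nlinarith
  have hg0 : g 0 = 0 := by
    simp [hg, Real.one_rpow, Real.zero_rpow (by linarith : b ≠ 0)]
  have hgh : g (1/2) = 0 := by
    norm_num [hg]
  have hmem0 : (0:ℝ) ∈ Set.Icc (0:ℝ) (1/2) := by norm_num
  have hmemh : (1/2:ℝ) ∈ Set.Icc (0:ℝ) (1/2) := by norm_num
  have hcomb := hconc.2 hmem0 hmemh (by norm_num)
    (show (0:ℝ) < 1 - 2*x by linarith) (show (0:ℝ) < 2*x by linarith) (by ring)
  rw [hg0, hgh] at hcomb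
  simp only [smul_eq_mul, mul_zero, add_zero, mul_zero, zero_add] at hcomb
  have hx' : 2*x*(1/2:ℝ) = x := by ring
  rw [hx'] at hcomb
  simp only [hg] at hcomb
  linarith

lemma keylem {a x : ℝ} (ha : 0 < a) (ha1 : a < 1) (hx : 0 < x) (hx2 : x < 1/2) :
    (x ^ (-a) - 1) * ((1-x) ^ (-a) - 1) < ((2:ℝ) ^ a - 1) ^ 2 := by
  set F : ℝ → ℝ := fun t => (t ^ (-a) - 1) * ((1-t) ^ (-a) - 1) with hF
  have hder : ∀ t : ℝ, 0 < t → t < 1 → HasDerivAt F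
      ((-a * t ^ (-a-1)) * ((1-t) ^ (-a) - 1) + (t ^ (-a) - 1) * (a * (1-t) ^ (-a-1))) t := by
    intro t ht0 ht1
    have h1t : (0:ℝ) < 1 - t := by linarith
    have h1 : HasDerivAt (fun t : ℝ => t ^ (-a) - 1) (-a * t ^ (-a-1)) t := by
      exact (Real.hasDerivAt_rpow_const (x := t) (p := -a) (Or.inl ht0.ne')).sub_const 1
    have h2 : HasDerivAt (fun t : ℝ => (1-t) ^ (-a) - 1) (a * (1-t) ^ (-a-1)) t := by
      have hc : HasDerivAt (fun t : ℝ => 1 - t) (-1) t := (hasDerivAt_id t).const_sub 1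
      have := ((Real.hasDerivAt_rpow_const (x := 1-t) (p := -a)
        (Or.inl h1t.ne')).comp t hc).sub_const 1
      exact this.congr_deriv (by ring)
    exact h1.mul h2
  have hcont : ContinuousOn F (Set.Icc x (1/2)) := by
    intro t ht
    exact ((hder t (lt_of_lt_of_le hx ht.1) (by linarith [ht.2])).continuousAt).continuousWithinAt
  have hmono : StrictMonoOn F (Set.Icc x (1/2)) := by
    apply strictMonoOn_of_deriv_pos (convex_Icc _ _) hcont
    intro t ht
    rw [interior_Icc] at ht
    obtain ⟨htx, ht2⟩ := ht
    have ht0 : 0 < t := lt_trans hx htx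
    have h1t : (0:ℝ) < 1 - t := by linarith
    have ht1 : t < 1 := by linarith
    rw [(hder t ht0 ht1).deriv]
    have hp : 0 < t ^ a := Real.rpow_pos_of_pos ht0 a
    have hq : 0 < (1-t) ^ a := Real.rpow_pos_of_pos h1t a
    have hp1 : t ^ a < 1 := Real.rpow_lt_one ht0.le ht1 ha
    have hq1 : (1-t) ^ a < 1 := Real.rpow_lt_one h1t.le (by linarith) ha
    have hglem := glem (b := a + 1) (by linarith) (by linarith) ht0 ht2
    have e1 : t ^ (a+1) = t ^ a * t := by rw [Real.rpow_add ht0, Real.rpow_one]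
    have e2 : (1-t) ^ (a+1) = (1-t) ^ a * (1-t) := by rw [Real.rpow_add h1t, Real.rpow_one]
    rw [e1, e2] at hglem
    have hpsi : (1-t) * (1 - (1-t) ^ a) < t * (1 - t ^ a) := by nlinarith
    have e3 : t ^ (-a) = (t ^ a)⁻¹ := by rw [Real.rpow_neg ht0.le]
    have e4 : (1-t) ^ (-a) = ((1-t) ^ a)⁻¹ := by rw [Real.rpow_neg h1t.le]
    have e5 : t ^ (-a-1) = (t ^ a * t)⁻¹ := by
      rw [show -a-1 = -(a+1) by ring, Real.rpow_neg ht0.le, Real.rpow_add ht0, Real.rpow_one]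
    have e6 : (1-t) ^ (-a-1) = ((1-t) ^ a * (1-t))⁻¹ := by
      rw [show -a-1 = -(a+1) by ring, Real.rpow_neg h1t.le, Real.rpow_add h1t, Real.rpow_one]
    rw [e3, e4, e5, e6]
    have heq : (-a * (t ^ a * t)⁻¹) * (((1-t) ^ a)⁻¹ - 1) +
        ((t ^ a)⁻¹ - 1) * (a * ((1-t) ^ a * (1-t))⁻¹) =
        a * (t * (1 - t ^ a) - (1-t) * (1 - (1-t) ^ a)) / (t ^ a * (1-t) ^ a * t * (1-t)) := by
      field_simp
      ring
    rw [heq]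
    apply div_pos
    · have : 0 < t * (1 - t ^ a) - (1-t) * (1 - (1-t) ^ a) := by linarith
      positivity
    · positivity
  have hmem1 : x ∈ Set.Icc x (1/2:ℝ) := ⟨le_refl x, hx2.le⟩
  have hmem2 : (1/2:ℝ) ∈ Set.Icc x (1/2:ℝ) := ⟨hx2.le, le_refl _⟩
  have hlt := hmono hmem1 hmem2 hx2
  have hhalf : ((1/2:ℝ)) ^ (-a) = 2 ^ a := by
    rw [show (1/2:ℝ) = 2⁻¹ by norm_num,
      Real.inv_rpow (by norm_num : (0:ℝ) ≤ 2), Real.rpow_neg (by norm_num : (0:ℝ) ≤ 2), inv_inv]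
  have hFh : F (1/2) = ((2:ℝ) ^ a - 1) ^ 2 := by
    simp only [hF]
    rw [show (1:ℝ) - 1/2 = 1/2 by norm_num, hhalf]
    ring
  rw [hFh] at hlt
  exact hlt

/-- Asymmetry of the adoption curve on a random k-regular graph: for s ∈ (0,1/2),
    θ̃(1/2) − θ̃(s) > θ̃(1−s) − θ̃(1/2). -/
theorem stmt_8 (k : ℕ) (hk : 3 ≤ k) (β : ℝ) (hβ : 0 < β)
    (θt : ℝ → ℝ)
    (hθt : ∀ s, θt s = ((k : ℝ) / (β * ((k : ℝ) - 2))) *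
      Real.log (((1 - s) ^ (((2 : ℝ) - k) / k) - 1) / ((2 : ℝ) ^ (((k : ℝ) - 2) / k) - 1))) :
    ∀ s ∈ Set.Ioo (0 : ℝ) (1 / 2),
      θt (1 - s) - θt (1 / 2) < θt (1 / 2) - θt s := by
  intro s hs
  obtain ⟨hs0, hs2⟩ := hs
  have hk3 : (3:ℝ) ≤ (k:ℝ) := by exact_mod_cast hk
  set a : ℝ := ((k:ℝ) - 2) / k with ha_def
  have hkpos : (0:ℝ) < k := by linarith
  have ha : 0 < a := div_pos (by linarith) hkpos
  have ha1 : a < 1 := by rw [ha_def, div_lt_one hkpos]; linarith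
  have hexp : ((2:ℝ) - k) / k = -a := by rw [ha_def]; ring
  set C : ℝ := (k : ℝ) / (β * ((k : ℝ) - 2)) with hC_def
  have hC : 0 < C := div_pos (by linarith) (mul_pos hβ (by linarith))
  have hD : 0 < (2:ℝ) ^ a - 1 := by
    have : (1:ℝ) < 2 ^ a :=
      (Real.one_lt_rpow_iff_of_pos (by norm_num)).2 (Or.inl ⟨one_lt_two, ha⟩)
    linarith
  have hA1 : 1 < (1 - s) ^ (-a) := by
    apply (Real.one_lt_rpow_iff_of_pos (by linarith : (0:ℝ) < 1 - s)).2
    exact Or.inr ⟨by linarith, by linarith⟩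
  have hB1 : 1 < s ^ (-a) := by
    apply (Real.one_lt_rpow_iff_of_pos hs0).2
    exact Or.inr ⟨by linarith, by linarith⟩
  have hmid : θt (1/2) = 0 := by
    rw [hθt, hexp, show (1:ℝ) - 1/2 = 1/2 by norm_num,
      show (1/2:ℝ) = 2⁻¹ by norm_num,
      Real.inv_rpow (by norm_num : (0:ℝ) ≤ 2), Real.rpow_neg (by norm_num : (0:ℝ) ≤ 2), inv_inv,
      div_self (ne_of_gt hD), Real.log_one, mul_zero]
  have hxs : θt s = C * Real.log (((1-s) ^ (-a) - 1) / ((2:ℝ) ^ a - 1)) := by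
    rw [hθt, hexp]
  have hx1s : θt (1-s) = C * Real.log ((s ^ (-a) - 1) / ((2:ℝ) ^ a - 1)) := by
    rw [hθt, hexp, show (1:ℝ) - (1-s) = s by ring]
  have hkey := keylem ha ha1 hs0 hs2
  have hpos1 : 0 < (s ^ (-a) - 1) / ((2:ℝ) ^ a - 1) := div_pos (by linarith) hD
  have hpos2 : 0 < ((1-s) ^ (-a) - 1) / ((2:ℝ) ^ a - 1) := div_pos (by linarith) hD
  have hprod : ((s ^ (-a) - 1) / ((2:ℝ) ^ a - 1)) * (((1-s) ^ (-a) - 1) / ((2:ℝ) ^ a - 1)) < 1 := by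
    rw [div_mul_div_comm]
    apply (div_lt_one (by positivity)).2
    nlinarith
  have hlogs : Real.log ((s ^ (-a) - 1) / ((2:ℝ) ^ a - 1)) +
      Real.log (((1-s) ^ (-a) - 1) / ((2:ℝ) ^ a - 1)) < 0 := by
    rw [← Real.log_mul (ne_of_gt hpos1) (ne_of_gt hpos2)]
    exact Real.log_neg (by positivity) hprod
  rw [hmid, hxs, hx1s]
  nlinarith [mul_neg_of_pos_of_neg hC hlogs]
end

section
/- With f(x) = (1−2x/k)^{k/2} and g(x) = k(1−f(x)) − 2x, for any 0 < α ≤ γ < 1 we have (k/β)·∫_{f^{-1}(1−α)}^{f^{-1}(1−γ)} 1/g(x) dx = θ̃(γ) − θ̃(α), where θ̃(s) = (k/(β(k−2)))·log(((1−s)^{(2−k)/k} − 1)/(2^{(k−2)/k} − 1)). -/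
open Real Set intervalIntegral

set_option maxHeartbeats 1000000 in
/-- With f(x) = (1−2x/k)^{k/2}, g(x) = k(1−f(x)) − 2x, and points xα, xγ with
    f(xα) = 1−α, f(xγ) = 1−γ (i.e. xα = f⁻¹(1−α), xγ = f⁻¹(1−γ)), for any
    0 < α ≤ γ < 1:  (k/β)·∫_{xα}^{xγ} 1/g(x) dx = θ̃(γ) − θ̃(α). -/
theorem stmt_11 (k : ℕ) (hk : 3 ≤ k) (β : ℝ) (hβ : 0 < β)
    (f g θt : ℝ → ℝ)
    (hf : ∀ x, f x = (1 - 2 * x / (k : ℝ)) ^ ((k : ℝ) / 2))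
    (hg : ∀ x, g x = (k : ℝ) * (1 - f x) - 2 * x)
    (hθt : ∀ s, θt s = ((k : ℝ) / (β * ((k : ℝ) - 2))) *
      Real.log (((1 - s) ^ (((2 : ℝ) - k) / k) - 1) / ((2 : ℝ) ^ (((k : ℝ) - 2) / k) - 1)))
    (α γ : ℝ) (hα : 0 < α) (hαγ : α ≤ γ) (hγ : γ < 1)
    (xα xγ : ℝ)
    (hxα : xα ∈ Set.Ico (0 : ℝ) ((k : ℝ) / 2)) (hxγ : xγ ∈ Set.Ico (0 : ℝ) ((k : ℝ) / 2))
    (hfα : f xα = 1 - α) (hfγ : f xγ = 1 - γ) :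
    ((k : ℝ) / β) * ∫ x in xα..xγ, 1 / g x = θt γ - θt α := by
  set K : ℝ := (k : ℝ) with hKdef
  have hK3 : (3:ℝ) ≤ K := by rw [hKdef]; exact_mod_cast hk
  have hK0 : (0:ℝ) < K := by linarith
  have hK2 : (2:ℝ) < K := by linarith
  have hKne : K ≠ 0 := ne_of_gt hK0
  have hK2ne : K - 2 ≠ 0 := ne_of_gt (by linarith)
  have hβne : β ≠ 0 := ne_of_gt hβ
  -- xα > 0
  have hxα0 : 0 < xα := by
    rcases lt_or_eq_of_le hxα.1 with h | h
    · exact h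
    · exfalso
      have := hfα
      rw [hf, ← h] at this
      norm_num [Real.one_rpow] at this
      linarith
  -- xα ≤ xγ
  have hord : xα ≤ xγ := by
    by_contra h
    push_neg at h
    have h0 : (0:ℝ) < 1 - 2 * xα / K := by
      rw [sub_pos, div_lt_one hK0]
      have := hxα.2; linarith
    have h1 : 1 - 2 * xα / K < 1 - 2 * xγ / K := by
      have h2 : 2 * xγ < 2 * xα := by linarith
      have := (div_lt_div_iff_of_pos_right hK0).mpr h2
      linarith
    have hlt : f xα < f xγ := by
      rw [hf, hf]
      exact Real.rpow_lt_rpow h0.le h1 (by positivity)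
    rw [hfα, hfγ] at hlt; linarith
  have hxγ0 : 0 < xγ := lt_of_lt_of_le hxα0 hord
  -- basic facts on the interval
  have hfacts : ∀ x ∈ Icc xα xγ, 0 < 1 - 2 * x / K ∧ 1 - 2 * x / K < 1 := by
    intro x hx
    constructor
    · rw [sub_pos, div_lt_one hK0]
      have := hxγ.2; have := hx.2; linarith
    · have hx0 : 0 < x := lt_of_lt_of_le hxα0 hx.1
      have : 0 < 2 * x / K := by positivity
      linarith
  have hgpos : ∀ x ∈ Icc xα xγ, 0 < g x := by
    intro x hx
    obtain ⟨hu0, hu1⟩ := hfacts x hx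
    have huK : (1 - 2 * x / K) ^ (K / 2) < 1 - 2 * x / K := by
      have := Real.rpow_lt_rpow_of_exponent_gt hu0 hu1 (by linarith : (1:ℝ) < K / 2)
      rwa [Real.rpow_one] at this
    have hgx : g x = K * ((1 - 2 * x / K) - (1 - 2 * x / K) ^ (K / 2)) := by
      rw [hg, hf]
      generalize ((1 - 2 * x / K : ℝ) ^ (K / 2 : ℝ)) = P
      field_simp
      ring
    rw [hgx]; exact mul_pos hK0 (by linarith)
  set C : ℝ := (2:ℝ) ^ ((K - 2) / K) - 1 with hCdef
  have hC0 : 0 < C := by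
    rw [hCdef, sub_pos]
    rw [Real.one_lt_rpow_iff_of_pos (by norm_num)]
    left
    constructor
    · norm_num
    · apply div_pos <;> linarith
  set H : ℝ → ℝ := fun y => (1 / (K - 2)) * Real.log ((1 - 2 * y / K) ^ (1 - K / 2) - 1)
    with hHdef
  -- derivative
  have key : ∀ x ∈ Icc xα xγ, HasDerivAt H (1 / g x) x := by
    intro x hx
    obtain ⟨hu0, hu1⟩ := hfacts x hx
    set u : ℝ := 1 - 2 * x / K with hudef
    have hA : 1 < u ^ (1 - K / 2) :=
      Real.one_lt_rpow_of_pos_of_lt_one_of_neg hu0 hu1 (by linarith)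
    have hAne : u ^ (1 - K / 2) - 1 ≠ 0 := by linarith
    have d1 : HasDerivAt (fun y : ℝ => 1 - 2 * y / K) (-(2 / K)) x := by
      have h := ((hasDerivAt_id x).const_mul (2 / K)).const_sub 1
      simp only [mul_one, id_eq] at h
      convert h using 2 with y
      case e'_8 => ring
      all_goals rfl
    have d2 : HasDerivAt (fun y : ℝ => (1 - 2 * y / K) ^ (1 - K / 2))
        (-(2 / K) * (1 - K / 2) * u ^ (1 - K / 2 - 1)) x :=
      d1.rpow_const (Or.inl (by rw [← hudef]; exact ne_of_gt hu0))
    have d3 := ((d2.sub_const 1).log hAne).const_mul (1 / (K - 2))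
    -- g x in terms of u
    have hgx : g x = K * (u - u ^ (K / 2)) := by
      rw [hg, hf, ← hudef, hudef]
      generalize (u : ℝ) ^ (K / 2 : ℝ) = P
      field_simp
      ring
    have huK : u ^ (K / 2) < u := by
      have := Real.rpow_lt_rpow_of_exponent_gt hu0 hu1 (by linarith : (1:ℝ) < K / 2)
      rwa [Real.rpow_one] at this
    have hac : u ^ (1 - K / 2 - 1) * u ^ (K / 2) = 1 := by
      rw [← Real.rpow_add hu0]; norm_num
    have hbc : u ^ (1 - K / 2) * u ^ (K / 2) = u := by
      rw [← Real.rpow_add hu0]; norm_num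
    have main : ∀ v a b c : ℝ, a * c = 1 → b * c = v → b - 1 ≠ 0 → v - c ≠ 0 →
        1 / (K - 2) * ((-(2 / K) * (1 - K / 2) * a) / (b - 1)) = 1 / (K * (v - c)) := by
      intro v a b c h1 h2 hb hu
      subst h2
      have hc : c ≠ 0 := by rintro rfl; simp at h1
      have ha : a = 1 / c := by field_simp; linarith
      subst ha
      field_simp
      ring
    have hval : 1 / (K - 2) * ((-(2 / K) * (1 - K / 2) * u ^ (1 - K / 2 - 1)) / (u ^ (1 - K / 2) - 1))
        = 1 / g x := by
      rw [hgx]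
      exact main u _ _ _ hac hbc hAne (by linarith)
    rw [hHdef, ← hval]
    exact d3
  -- continuity / integrability
  have hcont : ContinuousOn (fun x => 1 / g x) (Icc xα xγ) := by
    intro x hx
    obtain ⟨hu0, hu1⟩ := hfacts x hx
    apply ContinuousAt.continuousWithinAt
    have hb : ContinuousAt (fun y : ℝ => 1 - 2 * y / K) x := by fun_prop
    have hrp : ContinuousAt (fun y : ℝ => (1 - 2 * y / K) ^ (K / 2)) x :=
      hb.rpow_const (Or.inl (ne_of_gt hu0))
    have hgc : ContinuousAt g x := by
      have : ContinuousAt (fun y : ℝ => K * (1 - (1 - 2 * y / K) ^ (K / 2)) - 2 * y) x := by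
        fun_prop
      apply this.congr
      filter_upwards with y
      rw [hg, hf]
    have hgne : g x ≠ 0 := ne_of_gt (hgpos x hx)
    exact continuousAt_const.div hgc hgne
  have hint : ∫ x in xα..xγ, 1 / g x = H xγ - H xα := by
    apply intervalIntegral.integral_eq_sub_of_hasDerivAt
    · intro x hx
      exact key x (by rwa [uIcc_of_le hord] at hx)
    · exact (by rwa [uIcc_of_le hord] : ContinuousOn (fun x => 1 / g x) (uIcc xα xγ)).intervalIntegrable
  rw [hint]
  -- now rewrite θt
  have hθval : ∀ s x, x ∈ Icc xα xγ → f x = 1 - s →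
      θt s = (K / (β * (K - 2))) * (Real.log ((1 - 2 * x / K) ^ (1 - K / 2) - 1) - Real.log C) := by
    intro s x hx hfx
    obtain ⟨hu0, hu1⟩ := hfacts x hx
    have h1s : 1 - s = (1 - 2 * x / K) ^ (K / 2) := by rw [← hfx, hf]
    have hpow : (1 - s) ^ ((2 - K) / K) = (1 - 2 * x / K) ^ (1 - K / 2) := by
      rw [h1s, ← Real.rpow_mul hu0.le]
      congr 1
      field_simp
    have hA : 1 < (1 - 2 * x / K) ^ (1 - K / 2) :=
      Real.one_lt_rpow_of_pos_of_lt_one_of_neg hu0 hu1 (by linarith)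
    rw [hθt, hpow, Real.log_div (by linarith) (ne_of_gt hC0)]
  rw [hθval γ xγ (Set.mem_Icc.mpr ⟨hord, le_refl xγ⟩) hfγ,
      hθval α xα (Set.mem_Icc.mpr ⟨le_refl xα, hord⟩) hfα]
  rw [hHdef]
  field_simp
  ring
end

section
/- Let λ_i = β·i·(n−i)/(n−1) for α·n ≤ i ≤ γ·n − 1 (with 0 < α ≤ γ < 1). Then ∑_{i=⌈αn⌉}^{⌈γn⌉−1} 1/λ_i converges, as n → ∞, to (1/β)·[log(γ/(1−γ)) − log(α/(1−α))]. -/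
open Real Filter Finset

/-- Partial harmonic sum `∑_{i=1}^{m-1} 1/i`. -/
noncomputable def auxS (m : ℕ) : ℝ := ∑ i ∈ Finset.Ico 1 m, (1 : ℝ) / i

lemma auxS_eq (m : ℕ) : auxS m = (harmonic m : ℝ) - 1 / m := by
  rcases Nat.eq_zero_or_pos m with rfl | hm
  · simp [auxS, harmonic]
  · have h1 : auxS m + 1 / m = ∑ i ∈ Finset.Ico 1 (m + 1), (1 : ℝ) / i := by
      rw [auxS, Finset.sum_Ico_succ_top hm]
    have h2 : ∑ i ∈ Finset.Ico 1 (m + 1), (1 : ℝ) / i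
        = ∑ i ∈ Finset.range m, (1 : ℝ) / (1 + i) := by
      rw [Finset.sum_Ico_eq_sum_range]
      simp
    have h3 : ((harmonic m : ℚ) : ℝ) = ∑ i ∈ Finset.range m, (1 : ℝ) / (1 + i) := by
      rw [harmonic]
      push_cast
      refine Finset.sum_congr rfl fun i _ => ?_
      rw [one_div, add_comm]
    linarith [h1, h2, h3.symm]

lemma tendsto_auxS_sub_log :
    Tendsto (fun m : ℕ => auxS m - Real.log m) atTop (nhds Real.eulerMascheroniConstant) := by
  have h := Real.tendsto_harmonic_sub_log
  have h2 : Tendsto (fun m : ℕ => (1 : ℝ) / m) atTop (nhds 0) :=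
    tendsto_one_div_atTop_nhds_zero_nat
  have := h.sub h2
  rw [sub_zero] at this
  refine this.congr fun m => ?_
  rw [auxS_eq]; ring

lemma tendsto_log_sub_log (x : ℕ → ℕ) (l : ℝ) (hl : 0 < l)
    (hx : Tendsto (fun n : ℕ => (x n : ℝ) / n) atTop (nhds l)) :
    Tendsto (fun n : ℕ => Real.log (x n) - Real.log n) atTop (nhds (Real.log l)) := by
  have hlog : Tendsto (fun n : ℕ => Real.log ((x n : ℝ) / n)) atTop (nhds (Real.log l)) :=
    (Real.continuousAt_log hl.ne').tendsto.comp hx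
  refine hlog.congr' ?_
  have hev : ∀ᶠ n : ℕ in atTop, 0 < (x n : ℝ) / n := hx.eventually (eventually_gt_nhds hl)
  filter_upwards [hev, eventually_gt_atTop 0] with n h1 h2
  have hn : (0 : ℝ) < n := by exact_mod_cast h2
  have hxn : (0 : ℝ) < (x n : ℝ) := by
    by_contra h
    push_neg at h
    have : (x n : ℝ) / n ≤ 0 := div_nonpos_of_nonpos_of_nonneg h hn.le
    linarith
  rw [Real.log_div hxn.ne' hn.ne']

/-- With λ_i = β·i·(n−i)/(n−1), the sum ∑_{i=⌈αn⌉}^{⌈γn⌉−1} 1/λ_i converges, as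
    n → ∞, to (1/β)·[log(γ/(1−γ)) − log(α/(1−α))]. -/
theorem stmt_13 (β α γ : ℝ) (hβ : 0 < β) (hα : 0 < α) (hαγ : α ≤ γ) (hγ : γ < 1) :
    Filter.Tendsto
      (fun n : ℕ => ∑ i ∈ Finset.Ico ⌈α * n⌉₊ ⌈γ * n⌉₊,
        ((n : ℝ) - 1) / (β * i * ((n : ℝ) - i)))
      Filter.atTop
      (nhds ((1 / β) * (Real.log (γ / (1 - γ)) - Real.log (α / (1 - α))))) := by
  have hγ0 : 0 < γ := lt_of_lt_of_le hα hαγ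
  have h1γ : 0 < 1 - γ := by linarith
  have h1α : 0 < 1 - α := by linarith
  set a : ℕ → ℕ := fun n => ⌈α * (n : ℝ)⌉₊ with ha_def
  set b : ℕ → ℕ := fun n => ⌈γ * (n : ℝ)⌉₊ with hb_def
  -- ratio limits
  have hra : Tendsto (fun n : ℕ => (a n : ℝ) / n) atTop (nhds α) :=
    (tendsto_nat_ceil_mul_div_atTop hα.le).comp tendsto_natCast_atTop_atTop
  have hrb : Tendsto (fun n : ℕ => (b n : ℝ) / n) atTop (nhds γ) :=
    (tendsto_nat_ceil_mul_div_atTop hγ0.le).comp tendsto_natCast_atTop_atTop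
  -- eventual basic bounds
  have hev : ∀ᶠ n : ℕ in atTop, 0 < a n ∧ b n < n := by
    have h1 : ∀ᶠ n : ℕ in atTop, (1 : ℝ) / (1 - γ) ≤ (n : ℝ) :=
      tendsto_natCast_atTop_atTop.eventually_ge_atTop _
    filter_upwards [h1, eventually_gt_atTop 0] with n hn hn0
    have hnR : (0 : ℝ) < n := by exact_mod_cast hn0
    constructor
    · exact Nat.ceil_pos.mpr (by positivity)
    · have hlt : (b n : ℝ) < γ * n + 1 := Nat.ceil_lt_add_one (by positivity)
      have h2 : 1 ≤ (n : ℝ) * (1 - γ) := (div_le_iff₀ h1γ).mp hn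
      have : (b n : ℝ) < n := by nlinarith
      exact_mod_cast this
  have hab : ∀ n, a n ≤ b n := fun n =>
    Nat.ceil_le_ceil (mul_le_mul_of_nonneg_right hαγ (Nat.cast_nonneg n))
  -- tendsto atTop of index sequences
  have hta : Tendsto a atTop atTop :=
    tendsto_nat_ceil_atTop.comp (Tendsto.const_mul_atTop hα tendsto_natCast_atTop_atTop)
  have htb : Tendsto b atTop atTop :=
    tendsto_nat_ceil_atTop.comp (Tendsto.const_mul_atTop hγ0 tendsto_natCast_atTop_atTop)
  -- ratio limits of n - a n + 1 and n - b n + 1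
  have hrna : Tendsto (fun n : ℕ => ((n - a n + 1 : ℕ) : ℝ) / n) atTop (nhds (1 - α)) := by
    have base : Tendsto (fun n : ℕ => 1 - (a n : ℝ) / n + 1 / n) atTop (nhds (1 - α + 0)) :=
      (tendsto_const_nhds.sub hra).add tendsto_one_div_atTop_nhds_zero_nat
    rw [add_zero] at base
    refine base.congr' ?_
    filter_upwards [hev, eventually_gt_atTop 0] with n hn hn0
    have han : a n ≤ n := le_of_lt (lt_of_le_of_lt (hab n) hn.2)
    have hnR : (0 : ℝ) < n := by exact_mod_cast hn0
    have : ((n - a n + 1 : ℕ) : ℝ) = (n : ℝ) - a n + 1 := by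
      push_cast [Nat.cast_sub han]; ring
    rw [this]
    field_simp
  have hrnb : Tendsto (fun n : ℕ => ((n - b n + 1 : ℕ) : ℝ) / n) atTop (nhds (1 - γ)) := by
    have base : Tendsto (fun n : ℕ => 1 - (b n : ℝ) / n + 1 / n) atTop (nhds (1 - γ + 0)) :=
      (tendsto_const_nhds.sub hrb).add tendsto_one_div_atTop_nhds_zero_nat
    rw [add_zero] at base
    refine base.congr' ?_
    filter_upwards [hev, eventually_gt_atTop 0] with n hn hn0
    have hbn : b n ≤ n := le_of_lt hn.2
    have hnR : (0 : ℝ) < n := by exact_mod_cast hn0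
    have : ((n - b n + 1 : ℕ) : ℝ) = (n : ℝ) - b n + 1 := by
      push_cast [Nat.cast_sub hbn]; ring
    rw [this]
    field_simp
  -- tendsto atTop of n - a n + 1 and n - b n + 1
  have htgen : ∀ (x : ℕ → ℕ) (l : ℝ), 0 < l →
      Tendsto (fun n : ℕ => (x n : ℝ) / n) atTop (nhds l) → Tendsto x atTop atTop := by
    intro x l hl hx
    rw [← tendsto_natCast_atTop_iff (R := ℝ)]
    have hev2 : ∀ᶠ n : ℕ in atTop, l / 2 * n ≤ (x n : ℝ) := by
      have := hx.eventually (eventually_gt_nhds (show l / 2 < l by linarith))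
      filter_upwards [this, eventually_gt_atTop 0] with n h1 h2
      have hnR : (0 : ℝ) < n := by exact_mod_cast h2
      rw [lt_div_iff₀ hnR] at h1
      linarith
    exact tendsto_atTop_mono' _ hev2
      (Tendsto.const_mul_atTop (by linarith) tendsto_natCast_atTop_atTop)
  have htna : Tendsto (fun n => n - a n + 1) atTop atTop := htgen _ _ h1α hrna
  have htnb : Tendsto (fun n => n - b n + 1) atTop atTop := htgen _ _ h1γ hrnb
  -- the nice formula
  set F : ℕ → ℝ := fun n =>
    ((n : ℝ) - 1) / (β * n) *
      (auxS (b n) - auxS (a n) + (auxS (n - a n + 1) - auxS (n - b n + 1))) with hF_def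
  have heq : F =ᶠ[atTop] fun n : ℕ => ∑ i ∈ Finset.Ico (a n) (b n),
      ((n : ℝ) - 1) / (β * i * ((n : ℝ) - i)) := by
    filter_upwards [hev] with n hn
    obtain ⟨ha1, hbn⟩ := hn
    have hab' := hab n
    have hnR : (0 : ℝ) < n := by
      have : 0 < n := lt_of_le_of_lt (Nat.zero_le _) hbn
      exact_mod_cast this
    -- sum of 1/i
    have hs1 : ∑ i ∈ Finset.Ico (a n) (b n), (1 : ℝ) / i = auxS (b n) - auxS (a n) := by
      have := Finset.sum_Ico_consecutive (fun i : ℕ => (1 : ℝ) / i) ha1 hab'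
      rw [auxS, auxS]
      linarith [this]
    -- sum of 1/(n-i)
    have hs2 : ∑ i ∈ Finset.Ico (a n) (b n), (1 : ℝ) / ((n : ℝ) - i)
        = auxS (n - a n + 1) - auxS (n - b n + 1) := by
      have hcons := Finset.sum_Ico_consecutive (fun i : ℕ => (1 : ℝ) / i)
        (show 1 ≤ n - b n + 1 by omega) (show n - b n + 1 ≤ n - a n + 1 by omega)
      have hbij : ∑ j ∈ Finset.Ico (n - b n + 1) (n - a n + 1), (1 : ℝ) / j
          = ∑ i ∈ Finset.Ico (a n) (b n), (1 : ℝ) / ((n : ℝ) - i) := by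
        refine Finset.sum_nbij' (fun j => n - j) (fun i => n - i) ?_ ?_ ?_ ?_ ?_
        · intro j hj
          simp only [Finset.mem_Ico] at hj ⊢
          omega
        · intro i hi
          simp only [Finset.mem_Ico] at hi ⊢
          omega
        · intro j hj
          simp only [Finset.mem_Ico] at hj
          omega
        · intro i hi
          simp only [Finset.mem_Ico] at hi
          omega
        · intro j hj
          simp only [Finset.mem_Ico] at hj
          have hjn : j ≤ n := by omega
          congr 1
          push_cast [Nat.cast_sub hjn]
          ring
      rw [← hbij]
      simp only [auxS]
      linarith [hcons]
    -- pointwise identity and assembly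
    have hpt : ∀ i ∈ Finset.Ico (a n) (b n),
        ((n : ℝ) - 1) / (β * i * ((n : ℝ) - i))
          = ((n : ℝ) - 1) / (β * n) * ((1 : ℝ) / i + 1 / ((n : ℝ) - i)) := by
      intro i hi
      simp only [Finset.mem_Ico] at hi
      have hi1 : (0 : ℝ) < i := by
        have : 0 < i := lt_of_lt_of_le ha1 hi.1
        exact_mod_cast this
      have hin : (i : ℝ) < n := by
        have : i < n := lt_of_lt_of_le hi.2 hbn.le
        exact_mod_cast this
      have hni : (0 : ℝ) < (n : ℝ) - i := by linarith
      field_simp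
      ring
    rw [Finset.sum_congr rfl hpt, ← Finset.mul_sum, Finset.sum_add_distrib, hs1, hs2, hF_def]
  refine Tendsto.congr' heq ?_
  -- limit of the prefactor
  have hpre : Tendsto (fun n : ℕ => ((n : ℝ) - 1) / (β * n)) atTop (nhds (1 / β)) := by
    have h1n : Tendsto (fun n : ℕ => (1 - 1 / (n : ℝ)) * (1 / β)) atTop (nhds ((1 - 0) * (1 / β))) :=
      (tendsto_const_nhds.sub tendsto_one_div_atTop_nhds_zero_nat).mul tendsto_const_nhds
    rw [show (1 - 0 : ℝ) * (1 / β) = 1 / β by ring] at h1n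
    refine h1n.congr' ?_
    filter_upwards [eventually_gt_atTop 0] with n hn0
    have hnR : (0 : ℝ) < n := by exact_mod_cast hn0
    have hβ0 : β ≠ 0 := hβ.ne'
    rw [eq_div_iff (by positivity : β * (n : ℝ) ≠ 0)]
    field_simp
  -- limit of the inner part
  set c := Real.eulerMascheroniConstant with hc_def
  have hE := tendsto_auxS_sub_log
  have hEb : Tendsto (fun n : ℕ => auxS (b n) - Real.log (b n)) atTop (nhds c) := hE.comp htb
  have hEa : Tendsto (fun n : ℕ => auxS (a n) - Real.log (a n)) atTop (nhds c) := hE.comp hta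
  have hEna : Tendsto (fun n : ℕ => auxS (n - a n + 1) - Real.log (n - a n + 1 : ℕ)) atTop
      (nhds c) := hE.comp htna
  have hEnb : Tendsto (fun n : ℕ => auxS (n - b n + 1) - Real.log (n - b n + 1 : ℕ)) atTop
      (nhds c) := hE.comp htnb
  have hLb := tendsto_log_sub_log b γ hγ0 hrb
  have hLa := tendsto_log_sub_log a α hα hra
  have hLna := tendsto_log_sub_log (fun n => n - a n + 1) (1 - α) h1α hrna
  have hLnb := tendsto_log_sub_log (fun n => n - b n + 1) (1 - γ) h1γ hrnb
  have hG : Tendsto (fun n : ℕ =>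
      auxS (b n) - auxS (a n) + (auxS (n - a n + 1) - auxS (n - b n + 1))) atTop
      (nhds (Real.log γ - Real.log α + (Real.log (1 - α) - Real.log (1 - γ)))) := by
    have comb := ((hEb.sub hEa).add (hEna.sub hEnb)).add
      (((hLb.sub hLa).add (hLna.sub hLnb)))
    have : (c - c + (c - c) + (Real.log γ - Real.log α + (Real.log (1 - α) - Real.log (1 - γ))))
        = Real.log γ - Real.log α + (Real.log (1 - α) - Real.log (1 - γ)) := by ring
    rw [this] at comb
    refine comb.congr fun n => ?_
    ring
  have hmul := hpre.mul hG
  have hfinal : (1 / β) * (Real.log (γ / (1 - γ)) - Real.log (α / (1 - α)))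
      = 1 / β * (Real.log γ - Real.log α + (Real.log (1 - α) - Real.log (1 - γ))) := by
    rw [Real.log_div hγ0.ne' h1γ.ne', Real.log_div hα.ne' h1α.ne']
    ring
  rw [hfinal]
  exact hmul
end
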